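/- Let M > 0, r > 2M, μ = 1 − 2M/r, Δ = r² − 2Mr, f(r) = 2(r−2M)(r−3M)/r², q(r) = 3MΔ/r⁴. Define B^r = (1/2)(Δf)' − 2f(r−M) + Δ(q + f/r), B^a = −(1/2)f' + (q + f/r), and B⁰ = −(1/2)(Δ·(q + f/r)')' + r²( (r^{−3}B^r)' + r^{−4}B^r ) + V_P·(q + f/r) − (1/2)(V_P f)', where V_P(r) = −2M/r and ' denotes d/dr. Then B^r = 6Mμ², B^a = 2r^{−3}(r−3M)², and B⁰ = −3M r^{−4}(3r² − 20Mr + 30M²). -/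

import Mathlib

/-- The Morawetz multiplier radial function `f(r) = 2(r−2M)(r−3M)/r²` on Schwarzschild. -/
noncomputable def fMor (M : ℝ) (r : ℝ) : ℝ := 2 * (r - 2 * M) * (r - 3 * M) / r ^ 2

/-- The Morawetz multiplier zeroth-order function `q(r) = 3MΔ/r⁴`, `Δ = r² − 2Mr`. -/
noncomputable def qMor (M : ℝ) (r : ℝ) : ℝ := 3 * M * (r ^ 2 - 2 * M * r) / r ^ 4

/-- The bulk coefficient `B^r = (1/2)(Δf)' − 2f(r−M) + Δ(q + f/r)`. -/
noncomputable def BrMor (M : ℝ) (r : ℝ) : ℝ :=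
  (1 / 2) * deriv (fun x => (x ^ 2 - 2 * M * x) * fMor M x) r
    - 2 * fMor M r * (r - M) + (r ^ 2 - 2 * M * r) * (qMor M r + fMor M r / r)

/-- The bulk coefficient `B^a = −(1/2)f' + (q + f/r)`. -/
noncomputable def BaMor (M : ℝ) (r : ℝ) : ℝ :=
  -(1 / 2) * deriv (fMor M) r + (qMor M r + fMor M r / r)

/-- The bulk coefficient
`B⁰ = −(1/2)(Δ (q + f/r)')' + r²((r^{−3}B^r)' + r^{−4}B^r) + V_P (q + f/r) − (1/2)(V_P f)'`,
with `V_P(r) = −2M/r`. -/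
noncomputable def B0Mor (M : ℝ) (r : ℝ) : ℝ :=
  -(1 / 2) * deriv (fun x => (x ^ 2 - 2 * M * x) * deriv (fun y => qMor M y + fMor M y / y) x) r
    + r ^ 2 * (deriv (fun x => (x ^ 3)⁻¹ * BrMor M x) r + (r ^ 4)⁻¹ * BrMor M r)
    + (-2 * M / r) * (qMor M r + fMor M r / r)
    - (1 / 2) * deriv (fun x => (-2 * M / x) * fMor M x) r

private lemma hpoly (a b c d r : ℝ) :
    HasDerivAt (fun x => a*x^3 + b*x^2 + c*x + d) (3*a*r^2 + 2*b*r + c) r := by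
  have h3 := (hasDerivAt_pow 3 r).const_mul a
  have h2 := (hasDerivAt_pow 2 r).const_mul b
  have h1 := (hasDerivAt_id r).const_mul c
  have h := ((h3.add h2).add h1).add_const d
  refine h.congr_deriv ?_
  push_cast
  ring

private lemma deriv_cubic_div_pow (a b c d : ℝ) (k : ℕ) (r : ℝ) (hr : r ≠ 0) :
    deriv (fun x => (a*x^3+b*x^2+c*x+d)/x^k) r =
      ((3*a*r^2+2*b*r+c)*r^k - (a*r^3+b*r^2+c*r+d)*((k:ℝ)*r^(k-1)))/(r^k)^2 :=
  ((hpoly a b c d r).div (hasDerivAt_pow k r) (pow_ne_zero k hr)).deriv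

private lemma Br_eq (M r : ℝ) (hr : r ≠ 0) : BrMor M r = 6 * M * (1 - 2 * M / r) ^ 2 := by
  have hne : ∀ᶠ x in nhds r, x ≠ (0:ℝ) := eventually_ne_nhds hr
  have heq : (fun x => (x ^ 2 - 2 * M * x) * fMor M x) =ᶠ[nhds r]
      (fun x => (2*x^3 + (-14*M)*x^2 + (32*M^2)*x + (-24*M^3))/x^1) := by
    filter_upwards [hne] with x hx
    simp only [fMor]
    field_simp
    ring
  rw [BrMor, heq.deriv_eq, deriv_cubic_div_pow _ _ _ _ _ _ hr]
  simp only [fMor, qMor]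
  field_simp
  ring

private lemma g_deriv (M x : ℝ) (hx : x ≠ 0) :
    deriv (fun y => qMor M y + fMor M y / y) x = (-2*x^2 + 14*M*x - 18*M^2)/x^4 := by
  have hne : ∀ᶠ y in nhds x, y ≠ (0:ℝ) := eventually_ne_nhds hx
  have heq : (fun y => qMor M y + fMor M y / y) =ᶠ[nhds x]
      (fun y => (0*y^3 + 2*y^2 + (-7*M)*y + 6*M^2)/y^3) := by
    filter_upwards [hne] with y hy
    simp only [fMor, qMor]
    field_simp
    ring
  rw [heq.deriv_eq, deriv_cubic_div_pow _ _ _ _ _ _ hx]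
  field_simp
  ring

private lemma Ba_eq (M r : ℝ) (hr : r ≠ 0) :
    BaMor M r = 2 * (r ^ 3)⁻¹ * (r - 3 * M) ^ 2 := by
  have hne : ∀ᶠ x in nhds r, x ≠ (0:ℝ) := eventually_ne_nhds hr
  have heq : (fMor M) =ᶠ[nhds r]
      (fun x => (0*x^3 + 2*x^2 + (-10*M)*x + 12*M^2)/x^2) := by
    filter_upwards [hne] with x hx
    simp only [fMor]
    field_simp
    ring
  rw [BaMor, heq.deriv_eq, deriv_cubic_div_pow _ _ _ _ _ _ hr]
  simp only [fMor, qMor]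
  field_simp
  ring

private lemma B0_eq (M r : ℝ) (hr : r ≠ 0) :
    B0Mor M r = -3 * M * (r ^ 4)⁻¹ * (3 * r ^ 2 - 20 * M * r + 30 * M ^ 2) := by
  have hne : ∀ᶠ x in nhds r, x ≠ (0:ℝ) := eventually_ne_nhds hr
  have h1 : (fun x => (x ^ 2 - 2 * M * x) * deriv (fun y => qMor M y + fMor M y / y) x)
      =ᶠ[nhds r] (fun x => (-2*x^3 + (18*M)*x^2 + (-46*M^2)*x + 36*M^3)/x^3) := by
    filter_upwards [hne] with x hx
    rw [g_deriv M x hx]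
    field_simp
    ring
  have h2 : (fun x => (x ^ 3)⁻¹ * BrMor M x) =ᶠ[nhds r]
      (fun x => (0*x^3 + (6*M)*x^2 + (-24*M^2)*x + 24*M^3)/x^5) := by
    filter_upwards [hne] with x hx
    rw [Br_eq M x hx]
    field_simp
    ring
  have h3 : (fun x => (-2 * M / x) * fMor M x) =ᶠ[nhds r]
      (fun x => (0*x^3 + (-4*M)*x^2 + (20*M^2)*x + (-24*M^3))/x^3) := by
    filter_upwards [hne] with x hx
    simp only [fMor]
    field_simp
    ring
  rw [B0Mor, h1.deriv_eq, h2.deriv_eq, h3.deriv_eq, Br_eq M r hr,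
    deriv_cubic_div_pow _ _ _ _ _ _ hr, deriv_cubic_div_pow _ _ _ _ _ _ hr,
    deriv_cubic_div_pow _ _ _ _ _ _ hr]
  simp only [fMor, qMor]
  field_simp
  ring

/-- The explicit values of the bulk coefficients in the Morawetz estimate on Schwarzschild
with the classical multiplier `f = 2(r−2M)(r−3M)/r²`, `q = 3MΔ/r⁴`:
`B^r = 6Mμ²`, `B^a = 2r^{−3}(r−3M)²`, and `B⁰ = −3Mr^{−4}(3r² − 20Mr + 30M²)`. -/
theorem morawetz_bulk_coefficients (M : ℝ) (hM : 0 < M) (r : ℝ) (hr : 2 * M < r) :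
    BrMor M r = 6 * M * (1 - 2 * M / r) ^ 2 ∧
    BaMor M r = 2 * (r ^ 3)⁻¹ * (r - 3 * M) ^ 2 ∧
    B0Mor M r = -3 * M * (r ^ 4)⁻¹ * (3 * r ^ 2 - 20 * M * r + 30 * M ^ 2) := by
  have hr0 : r ≠ 0 := by nlinarith
  exact ⟨Br_eq M r hr0, Ba_eq M r hr0, B0_eq M r hr0⟩
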